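/- arXiv:2308.12042 — 4 statements merged into one kernel-verified Lean document; each statement's English description precedes it below -/
import Mathlib

section
/- Let ν be an outer measure on a metric space X and define integration of nonnegative Borel functions by Cavalieri's formula ∫_X f dν := ∫₀^∞ ν({f ≥ t}) dt. If ν is submodular, i.e. ν(E∪F) + ν(E∩F) ≤ ν(E) + ν(F) for all Borel E, F, then the integral is subadditive: ∫_X (f+g) dν ≤ ∫_X f dν + ∫_X g dν for all Borel f, g : X → [0,∞]. -/
open MeasureTheory ENNReal

/-- The Cavalieri integral `∫_X f dν := ∫₀^∞ ν({f ≥ t}) dt` of a nonnegative function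
with respect to an outer measure `ν`. -/
noncomputable def cavalieriIntegral {X : Type*} (ν : OuterMeasure X) (f : X → ℝ≥0∞) : ℝ≥0∞ :=
  ∫⁻ t in Set.Ioi (0 : ℝ), ν {x | ENNReal.ofReal t ≤ f x}

private lemma chainAux {X : Type*} [MeasurableSpace X] (ν : OuterMeasure X)
    (hsub : ∀ E F : Set X, MeasurableSet E → MeasurableSet F →
      ν (E ∪ F) + ν (E ∩ F) ≤ ν E + ν F) :
    ∀ (q : ℕ) (G : ℕ → Set X) (F : Set X), (∀ m, MeasurableSet (G m)) →
      MeasurableSet F → Antitone G → F ⊆ G 0 →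
      ∑ m ∈ Finset.range q, ν (G (m + 1) ∪ F ∩ G m) ≤
        ν F + ∑ m ∈ Finset.range q, ν (G (m + 1)) := by
  intro q
  induction q with
  | zero => intro G F _ _ _ _; simp
  | succ q ih =>
    intro G F hG hF hmono hFG
    rw [Finset.sum_range_succ' (fun m => ν (G (m + 1) ∪ F ∩ G m)),
      Finset.sum_range_succ' (fun m => ν (G (m + 1)))]
    simp only [Nat.zero_add]
    have h0 : F ∩ G 0 = F := Set.inter_eq_left.mpr hFG
    have ih' := ih (fun m => G (m + 1)) (F ∩ G 1) (fun m => hG (m + 1))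
      (hF.inter (hG 1)) (fun a b hab => hmono (by omega)) Set.inter_subset_right
    have hEq : ∀ m : ℕ, F ∩ G 1 ∩ G (m + 1) = F ∩ G (m + 1) := by
      intro m
      rw [Set.inter_assoc, Set.inter_eq_right.mpr (hmono (by omega : 1 ≤ m + 1))]
    simp only [hEq] at ih'
    have key := hsub (G 1) F (hG 1) hF
    rw [h0]
    calc ∑ m ∈ Finset.range q, ν (G (m + 1 + 1) ∪ F ∩ G (m + 1)) + ν (G 1 ∪ F)
        ≤ (ν (F ∩ G 1) + ∑ m ∈ Finset.range q, ν (G (m + 1 + 1))) + ν (G 1 ∪ F) :=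
          add_le_add_left ih' _
      _ = ∑ m ∈ Finset.range q, ν (G (m + 1 + 1)) + (ν (G 1 ∪ F) + ν (G 1 ∩ F)) := by
          rw [Set.inter_comm (G 1) F]; ring
      _ ≤ ∑ m ∈ Finset.range q, ν (G (m + 1 + 1)) + (ν (G 1) + ν F) := add_le_add le_rfl key
      _ = ν F + (∑ m ∈ Finset.range q, ν (G (m + 1 + 1)) + ν (G 1)) := by ring

open scoped Classical in
private lemma sortAux {X : Type*} [MeasurableSpace X] (ν : OuterMeasure X)
    (hsub : ∀ E F : Set X, MeasurableSet E → MeasurableSet F →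
      ν (E ∪ F) + ν (E ∩ F) ≤ ν E + ν F)
    (L : ℕ → Set X) (hL : ∀ i, MeasurableSet (L i)) :
    ∀ n : ℕ,
      ∑ m ∈ Finset.range n,
          ν {x | m + 1 ≤ ∑ i ∈ Finset.range n, if x ∈ L i then 1 else 0} ≤
        ∑ i ∈ Finset.range n, ν (L i) := by
  classical
  intro n
  induction n with
  | zero => simp
  | succ n ih =>
    set c : X → ℕ := fun x => ∑ i ∈ Finset.range n, if x ∈ L i then 1 else 0 with hc
    have hcm : Measurable c := by
      apply Finset.measurable_sum
      intro i _
      exact Measurable.ite (hL i) measurable_const measurable_const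
    set G : ℕ → Set X := fun m => {x | m ≤ c x} with hG
    have hGmeas : ∀ m, MeasurableSet (G m) := by
      intro m
      have : G m = c ⁻¹' {k | m ≤ k} := rfl
      rw [this]
      exact hcm (by trivial)
    have hGanti : Antitone G := by
      intro a b hab x hx
      exact le_trans hab hx
    have hcle : ∀ x, c x ≤ n := by
      intro x
      calc c x ≤ ∑ _i ∈ Finset.range n, 1 :=
            Finset.sum_le_sum (fun i _ => by split <;> omega)
        _ = n := by simp
    have hGempty : G (n + 1) = ∅ := by
      ext x
      simp only [hG, Set.mem_setOf_eq, Set.mem_empty_iff_false, iff_false, not_le]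
      exact lt_of_le_of_lt (hcle x) (by omega)
    have hsetEq : ∀ m : ℕ,
        {x | m + 1 ≤ ∑ i ∈ Finset.range (n + 1), if x ∈ L i then 1 else 0} =
          G (m + 1) ∪ L n ∩ G m := by
      intro m
      ext x
      have hsum : (∑ i ∈ Finset.range (n + 1), if x ∈ L i then 1 else 0) =
          c x + (if x ∈ L n then 1 else 0) := Finset.sum_range_succ _ n
      simp only [Set.mem_setOf_eq, Set.mem_union, Set.mem_inter_iff, hsum, hG]
      by_cases hx : x ∈ L n <;>
        simp only [hx, if_true, if_false, true_and, false_and, or_false, add_zero] <;> omega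
    calc ∑ m ∈ Finset.range (n + 1),
          ν {x | m + 1 ≤ ∑ i ∈ Finset.range (n + 1), if x ∈ L i then 1 else 0}
        = ∑ m ∈ Finset.range (n + 1), ν (G (m + 1) ∪ L n ∩ G m) := by
          exact Finset.sum_congr rfl fun m _ => by rw [hsetEq m]
      _ ≤ ν (L n) + ∑ m ∈ Finset.range (n + 1), ν (G (m + 1)) :=
          chainAux ν hsub (n + 1) G (L n) hGmeas (hL n) hGanti (fun x _ => by
            simp [hG])
      _ = ν (L n) + ∑ m ∈ Finset.range n, ν (G (m + 1)) := by
          rw [Finset.sum_range_succ, hGempty]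
          simp
      _ ≤ ν (L n) + ∑ i ∈ Finset.range n, ν (L i) := by
          exact add_le_add le_rfl (le_trans (le_of_eq rfl) ih)
      _ = ∑ i ∈ Finset.range (n + 1), ν (L i) := by
          rw [Finset.sum_range_succ]; ring

private lemma countBound {N : ℕ} {cond : ℕ → Prop} [DecidablePred cond]
    (hmono : ∀ i j : ℕ, i ≤ j → cond j → cond i)
    (hlt : (∑ i ∈ Finset.range N, if cond i then 1 else 0) < N) :
    ¬ cond (∑ i ∈ Finset.range N, if cond i then 1 else 0) := by
  intro hcond
  set a := ∑ i ∈ Finset.range N, if cond i then 1 else 0 with ha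
  have h1 : a + 1 ≤ a := by
    calc a + 1 = ∑ _i ∈ Finset.range (a + 1), 1 := by simp
      _ = ∑ i ∈ Finset.range (a + 1), (if cond i then 1 else 0) := by
          refine Finset.sum_congr rfl fun i hi => ?_
          rw [if_pos (hmono i a (Nat.lt_succ_iff.mp (Finset.mem_range.mp hi)) hcond)]
      _ ≤ a := by
          conv_rhs => rw [ha]
          exact Finset.sum_le_sum_of_subset (Finset.range_subset_range.mpr (by omega))
  exact absurd h1 (by omega)

open scoped Classical in
private lemma floorBound {X : Type*} (φ : X → ℝ≥0∞) {ε : ℝ} (hε : 0 < ε) (N : ℕ) (x : X)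
    (hlt : (∑ i ∈ Finset.range N,
        if ENNReal.ofReal (((i : ℝ) + 1) * ε) ≤ φ x then 1 else 0) < N) :
    φ x < ENNReal.ofReal
      ((((∑ i ∈ Finset.range N,
          if ENNReal.ofReal (((i : ℝ) + 1) * ε) ≤ φ x then 1 else 0 : ℕ) : ℝ) + 1) * ε) := by
  have hmono : ∀ i j : ℕ, i ≤ j →
      (ENNReal.ofReal (((j : ℝ) + 1) * ε) ≤ φ x) →
      (ENNReal.ofReal (((i : ℝ) + 1) * ε) ≤ φ x) := by
    intro i j hij hj
    refine le_trans (ENNReal.ofReal_le_ofReal ?_) hj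
    have : (i : ℝ) + 1 ≤ (j : ℝ) + 1 := by
      have : (i : ℝ) ≤ (j : ℝ) := by exact_mod_cast hij
      linarith
    nlinarith
  have := countBound (N := N) hmono hlt
  exact not_le.mp this

private lemma lowerSumAux {X : Type*} [MeasurableSpace X] (ν : OuterMeasure X)
    (φ : X → ℝ≥0∞) {ε : ℝ} (hε : 0 < ε) (N : ℕ) :
    ENNReal.ofReal ε * ∑ i ∈ Finset.range N, ν {x | ENNReal.ofReal (((i : ℝ) + 1) * ε) ≤ φ x} ≤
      cavalieriIntegral ν φ := by
  rw [Finset.mul_sum]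
  have key : ∀ N : ℕ,
      ∑ i ∈ Finset.range N, ENNReal.ofReal ε * ν {x | ENNReal.ofReal (((i : ℝ) + 1) * ε) ≤ φ x} ≤
        ∫⁻ t in Set.Ioc (0 : ℝ) ((N : ℝ) * ε), ν {x | ENNReal.ofReal t ≤ φ x} := by
    intro N
    induction N with
    | zero => simp
    | succ N ih =>
      rw [Finset.sum_range_succ]
      have h1 : (0 : ℝ) ≤ (N : ℝ) * ε := by positivity
      have h2 : (N : ℝ) * ε ≤ ((N : ℕ) + 1 : ℝ) * ε := by nlinarith
      have hsplit : Set.Ioc (0 : ℝ) (((N : ℕ) + 1 : ℝ) * ε) =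
          Set.Ioc (0 : ℝ) ((N : ℝ) * ε) ∪ Set.Ioc ((N : ℝ) * ε) (((N : ℕ) + 1 : ℝ) * ε) :=
        (Set.Ioc_union_Ioc_eq_Ioc h1 h2).symm
      have hdisj : Disjoint (Set.Ioc (0 : ℝ) ((N : ℝ) * ε))
          (Set.Ioc ((N : ℝ) * ε) (((N : ℕ) + 1 : ℝ) * ε)) := by
        rw [Set.disjoint_left]
        rintro t ⟨_, ht1⟩ ⟨ht2, _⟩
        linarith
      have hcast : (((N + 1 : ℕ) : ℝ)) * ε = ((N : ℕ) + 1 : ℝ) * ε := by push_cast; ring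
      rw [hcast, hsplit, lintegral_union measurableSet_Ioc hdisj]
      refine add_le_add ih ?_
      have hconst : ENNReal.ofReal ε * ν {x | ENNReal.ofReal (((N : ℝ) + 1) * ε) ≤ φ x} =
          ∫⁻ _t in Set.Ioc ((N : ℝ) * ε) (((N : ℕ) + 1 : ℝ) * ε),
            ν {x | ENNReal.ofReal (((N : ℝ) + 1) * ε) ≤ φ x} := by
        rw [setLIntegral_const, Real.volume_Ioc]
        have : ((N : ℕ) + 1 : ℝ) * ε - (N : ℝ) * ε = ε := by push_cast; ring
        rw [this, mul_comm]
      rw [hconst]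
      refine setLIntegral_mono' measurableSet_Ioc fun t ht => ?_
      refine measure_mono fun x hx => le_trans (ENNReal.ofReal_le_ofReal ?_) hx
      have := ht.2
      push_cast at this ⊢
      linarith
  refine le_trans (key N) (lintegral_mono_set Set.Ioc_subset_Ioi_self)

open scoped Classical in
/-- If the outer measure `ν` on a metric space `X` is submodular on Borel
sets, then the Cavalieri integral is subadditive on nonnegative Borel functions. -/
theorem cavalieri_subadditive_of_submodular
    {X : Type*} [MetricSpace X] [MeasurableSpace X] [BorelSpace X]
    (ν : OuterMeasure X)
    (hsub : ∀ E F : Set X, MeasurableSet E → MeasurableSet F →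
      ν (E ∪ F) + ν (E ∩ F) ≤ ν E + ν F)
    (f g : X → ℝ≥0∞) (hf : Measurable f) (hg : Measurable g) :
    cavalieriIntegral ν (f + g) ≤ cavalieriIntegral ν f + cavalieriIntegral ν g := by
  have hanti : Antitone (fun t : ℝ => ν {x | ENNReal.ofReal t ≤ f x + g x}) := by
    intro a b hab
    exact measure_mono fun x hx => le_trans (ENNReal.ofReal_le_ofReal hab) hx
  have hmeas : Measurable (fun t : ℝ => ν {x | ENNReal.ofReal t ≤ f x + g x}) :=
    hanti.measurable
  have main : ∀ ε : ℝ, 0 < ε →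
      (∫⁻ t in Set.Ioi (2 * ε), ν {x | ENNReal.ofReal t ≤ f x + g x}) ≤
        cavalieriIntegral ν f + cavalieriIntegral ν g := by
    intro ε hε
    have cover : Set.Ioi (2 * ε) ⊆
        ⋃ k : ℕ, Set.Ico (((k : ℝ) + 2) * ε) (((k : ℝ) + 3) * ε) := by
      intro t ht
      rw [Set.mem_Ioi] at ht
      have htpos : 0 < t := lt_trans (by positivity) ht
      set j := ⌊t / ε⌋₊ with hj
      have hj2 : 2 ≤ j := Nat.le_floor (by rw [Nat.cast_ofNat, le_div_iff₀ hε]; linarith)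
      have hjle : (j : ℝ) * ε ≤ t := by
        have h := Nat.floor_le (le_of_lt (div_pos htpos hε))
        rw [← hj] at h
        calc (j : ℝ) * ε ≤ (t / ε) * ε := by nlinarith
          _ = t := by field_simp
      have hjlt : t < ((j : ℝ) + 1) * ε := by
        have h := Nat.lt_floor_add_one (t / ε)
        rw [← hj] at h
        calc t = (t / ε) * ε := by field_simp
          _ < ((j : ℝ) + 1) * ε := by nlinarith
      refine Set.mem_iUnion.mpr ⟨j - 2, Set.mem_Ico.mpr ⟨?_, ?_⟩⟩
      all_goals
        have hcast : ((j - 2 : ℕ) : ℝ) = (j : ℝ) - 2 := by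
          push_cast [hj2]; ring
        rw [hcast]
      · calc ((j : ℝ) - 2 + 2) * ε = (j : ℝ) * ε := by ring
          _ ≤ t := hjle
      · calc t < ((j : ℝ) + 1) * ε := hjlt
          _ = ((j : ℝ) - 2 + 3) * ε := by ring
    have step1 : (∫⁻ t in Set.Ioi (2 * ε), ν {x | ENNReal.ofReal t ≤ f x + g x}) ≤
        ∑' k : ℕ, ENNReal.ofReal ε *
          ν {x | ENNReal.ofReal (((k : ℝ) + 2) * ε) ≤ f x + g x} := by
      refine le_trans (lintegral_mono_set cover) ?_
      refine le_trans (lintegral_iUnion_le _ _) ?_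
      refine ENNReal.tsum_le_tsum fun k => ?_
      have hb : (∫⁻ t in Set.Ico (((k : ℝ) + 2) * ε) (((k : ℝ) + 3) * ε),
            ν {x | ENNReal.ofReal t ≤ f x + g x}) ≤
          ∫⁻ _t in Set.Ico (((k : ℝ) + 2) * ε) (((k : ℝ) + 3) * ε),
            ν {x | ENNReal.ofReal (((k : ℝ) + 2) * ε) ≤ f x + g x} :=
        setLIntegral_mono' measurableSet_Ico fun t ht =>
          measure_mono fun x hx => le_trans (ENNReal.ofReal_le_ofReal ht.1) hx
      refine le_trans hb ?_
      rw [setLIntegral_const, Real.volume_Ico]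
      have he : ((k : ℝ) + 3) * ε - ((k : ℝ) + 2) * ε = ε := by ring
      rw [he, mul_comm]
    have step2 : ∀ M : ℕ,
        (∑ k ∈ Finset.range M, ENNReal.ofReal ε *
          ν {x | ENNReal.ofReal (((k : ℝ) + 2) * ε) ≤ f x + g x}) ≤
          cavalieriIntegral ν f + cavalieriIntegral ν g := by
      intro M
      set N := M + 1 with hN
      set L : ℕ → Set X := fun i =>
        if i < N then {x | ENNReal.ofReal (((i : ℝ) + 1) * ε) ≤ f x}
        else {x | ENNReal.ofReal ((((i - N : ℕ) : ℝ) + 1) * ε) ≤ g x} with hLdef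
      have hLm : ∀ i, MeasurableSet (L i) := by
        intro i
        by_cases h' : i < N <;> simp only [hLdef, h', if_true, if_false]
        · exact measurableSet_le measurable_const hf
        · exact measurableSet_le measurable_const hg
      have hcsplit : ∀ x : X,
          (∑ i ∈ Finset.range (N + N), if x ∈ L i then 1 else 0) =
          (∑ i ∈ Finset.range N, if ENNReal.ofReal (((i : ℝ) + 1) * ε) ≤ f x then 1 else 0) +
          (∑ i ∈ Finset.range N, if ENNReal.ofReal (((i : ℝ) + 1) * ε) ≤ g x then 1 else 0) := by
        intro x
        rw [Finset.sum_range_add]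
        congr 1
        · refine Finset.sum_congr rfl fun i hi => ?_
          simp only [hLdef, Finset.mem_range.mp hi, if_true, Set.mem_setOf_eq]
        · refine Finset.sum_congr rfl fun i _ => ?_
          have h1 : ¬ (N + i < N) := by omega
          simp only [hLdef, h1, if_false, Set.mem_setOf_eq, Nat.add_sub_cancel_left]
      have incl : ∀ k : ℕ, k < M →
          {x | ENNReal.ofReal (((k : ℝ) + 2) * ε) ≤ f x + g x} ⊆
            {x | k + 1 ≤ ∑ i ∈ Finset.range (N + N), if x ∈ L i then 1 else 0} := by
        intro k hk x hx
        rw [Set.mem_setOf_eq] at hx ⊢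
        by_contra hcon
        push_neg at hcon
        rw [hcsplit x] at hcon
        set a := ∑ i ∈ Finset.range N,
          if ENNReal.ofReal (((i : ℝ) + 1) * ε) ≤ f x then 1 else 0 with haa
        set b := ∑ i ∈ Finset.range N,
          if ENNReal.ofReal (((i : ℝ) + 1) * ε) ≤ g x then 1 else 0 with hbb
        have hab : a + b ≤ k := by omega
        have hfx := floorBound f hε N x (by omega)
        have hgx := floorBound g hε N x (by omega)
        rw [← haa] at hfx
        rw [← hbb] at hgx
        have hsum := ENNReal.add_lt_add hfx hgx
        rw [← ENNReal.ofReal_add (by positivity) (by positivity)] at hsum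
        have hle : ((a : ℝ) + 1) * ε + ((b : ℝ) + 1) * ε ≤ ((k : ℝ) + 2) * ε := by
          have hc : (a : ℝ) + (b : ℝ) ≤ (k : ℝ) := by exact_mod_cast hab
          nlinarith
        exact absurd hx (not_le.mpr (lt_of_lt_of_le hsum (ENNReal.ofReal_le_ofReal hle)))
      have sort := sortAux ν hsub L hLm (N + N)
      have hsum2 : (∑ i ∈ Finset.range (N + N), ν (L i)) =
          (∑ i ∈ Finset.range N, ν {x | ENNReal.ofReal (((i : ℝ) + 1) * ε) ≤ f x}) +
          ∑ i ∈ Finset.range N, ν {x | ENNReal.ofReal (((i : ℝ) + 1) * ε) ≤ g x} := by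
        rw [Finset.sum_range_add]
        congr 1
        · refine Finset.sum_congr rfl fun i hi => ?_
          simp only [hLdef, Finset.mem_range.mp hi, if_true]
        · refine Finset.sum_congr rfl fun i _ => ?_
          have h1 : ¬ (N + i < N) := by omega
          simp only [hLdef, h1, if_false, Nat.add_sub_cancel_left]
      calc (∑ k ∈ Finset.range M, ENNReal.ofReal ε *
            ν {x | ENNReal.ofReal (((k : ℝ) + 2) * ε) ≤ f x + g x})
          ≤ ∑ k ∈ Finset.range M, ENNReal.ofReal ε *
            ν {x | k + 1 ≤ ∑ i ∈ Finset.range (N + N), if x ∈ L i then 1 else 0} :=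
            Finset.sum_le_sum fun k hk =>
              mul_le_mul_right (measure_mono (incl k (Finset.mem_range.mp hk))) _
        _ = ENNReal.ofReal ε * ∑ k ∈ Finset.range M,
            ν {x | k + 1 ≤ ∑ i ∈ Finset.range (N + N), if x ∈ L i then 1 else 0} :=
            (Finset.mul_sum _ _ _).symm
        _ ≤ ENNReal.ofReal ε * ∑ m ∈ Finset.range (N + N),
            ν {x | m + 1 ≤ ∑ i ∈ Finset.range (N + N), if x ∈ L i then 1 else 0} :=
            mul_le_mul_right
              (Finset.sum_le_sum_of_subset (Finset.range_subset_range.mpr (by omega))) _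
        _ ≤ ENNReal.ofReal ε *
            ((∑ i ∈ Finset.range N, ν {x | ENNReal.ofReal (((i : ℝ) + 1) * ε) ≤ f x}) +
             ∑ i ∈ Finset.range N, ν {x | ENNReal.ofReal (((i : ℝ) + 1) * ε) ≤ g x}) := by
            refine mul_le_mul_right ?_ _
            rw [← hsum2]
            exact sort
        _ = ENNReal.ofReal ε *
              (∑ i ∈ Finset.range N, ν {x | ENNReal.ofReal (((i : ℝ) + 1) * ε) ≤ f x}) +
            ENNReal.ofReal ε *
              ∑ i ∈ Finset.range N, ν {x | ENNReal.ofReal (((i : ℝ) + 1) * ε) ≤ g x} := by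
            rw [mul_add]
        _ ≤ cavalieriIntegral ν f + cavalieriIntegral ν g :=
            add_le_add (lowerSumAux ν f hε N) (lowerSumAux ν g hε N)
    refine le_trans step1 ?_
    rw [ENNReal.tsum_eq_iSup_nat]
    exact iSup_le step2
  have hrw : cavalieriIntegral ν (f + g) =
      ∫⁻ t in Set.Ioi (0 : ℝ), ν {x | ENNReal.ofReal t ≤ f x + g x} := by
    simp only [cavalieriIntegral, Pi.add_apply]
  rw [hrw]
  have climb : (∫⁻ t in Set.Ioi (0 : ℝ), ν {x | ENNReal.ofReal t ≤ f x + g x}) ≤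
      ⨆ n : ℕ, ∫⁻ t in Set.Ioi (1 / ((n : ℝ) + 1)),
        ν {x | ENNReal.ofReal t ≤ f x + g x} := by
    rw [← lintegral_indicator measurableSet_Ioi]
    calc (∫⁻ t, (Set.Ioi (0 : ℝ)).indicator
            (fun t => ν {x | ENNReal.ofReal t ≤ f x + g x}) t)
        ≤ ∫⁻ t, ⨆ n : ℕ, (Set.Ioi (1 / ((n : ℝ) + 1))).indicator
            (fun t => ν {x | ENNReal.ofReal t ≤ f x + g x}) t := by
          refine lintegral_mono fun t => ?_
          by_cases ht : 0 < t
          · obtain ⟨n, hn⟩ := exists_nat_one_div_lt ht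
            refine le_trans ?_ (le_iSup _ n)
            rw [Set.indicator_of_mem (Set.mem_Ioi.mpr ht),
              Set.indicator_of_mem (Set.mem_Ioi.mpr hn)]
          · rw [Set.indicator_of_notMem (by simpa using ht)]
            exact zero_le
      _ = ⨆ n : ℕ, ∫⁻ t, (Set.Ioi (1 / ((n : ℝ) + 1))).indicator
            (fun t => ν {x | ENNReal.ofReal t ≤ f x + g x}) t := by
          refine lintegral_iSup (fun n => hmeas.indicator measurableSet_Ioi) ?_
          intro n m hnm
          refine Set.indicator_le_indicator_of_subset (Set.Ioi_subset_Ioi ?_)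
            (fun t => zero_le)
          apply one_div_le_one_div_of_le (by positivity)
          have : (n : ℝ) ≤ (m : ℝ) := by exact_mod_cast hnm
          linarith
      _ = ⨆ n : ℕ, ∫⁻ t in Set.Ioi (1 / ((n : ℝ) + 1)),
            ν {x | ENNReal.ofReal t ≤ f x + g x} :=
          iSup_congr fun n => lintegral_indicator measurableSet_Ioi _
  refine le_trans climb (iSup_le fun n => ?_)
  have hε : 0 < 1 / ((n : ℝ) + 1) / 2 := by positivity
  have h2 : 2 * (1 / ((n : ℝ) + 1) / 2) = 1 / ((n : ℝ) + 1) := by ring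
  have hmain := main _ hε
  rw [h2] at hmain
  exact hmain
end

section
/- Let (Q,𝒬,𝔮) be a measure space and q ↦ μ_q a disjoint measure-valued map from Q to (X,Σ), with μ := ∫ μ_q d𝔮(q). Then the map i_𝔮 : L⁰(μ) → L⁰(𝔮; L⁰(μ_⋆)), sending the class of F to the 𝔮-a.e. class of q ↦ [F]_{μ_q}, is a well-defined linear and ring isomorphism. -/
open MeasureTheory

variable {Q X : Type*} [MeasurableSpace Q] [MeasurableSpace X]

/-- The equivalence relation on families `(f_q)_{q∈Q}` of functions on `X`:
`𝔮`-a.e. `q`, `f q = g q` holds `μ q`-a.e.  Quotienting by it produces the space of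
(`𝔮`-a.e. classes of) families of elements of `L⁰(μ_q)`. -/
def aeFamilySetoid (𝔮 : Measure Q) (μ : Q → Measure X) : Setoid (Q → X → ℝ) where
  r f g := ∀ᵐ q ∂𝔮, f q =ᵐ[μ q] g q
  iseqv := by
    constructor
    · exact fun f => Filter.Eventually.of_forall fun q => Filter.EventuallyEq.refl _ _
    · exact fun h => h.mono fun q hq => hq.symm
    · exact fun h₁ h₂ => (h₁.and h₂).mono fun q hq => hq.1.trans hq.2

/-- Let `q ↦ μ q` be a *disjoint* measure-valued map from `(Q,𝒬,𝔮)`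
to `(X,Σ)` with integrated (σ-finite) measure `μtot = ∫ μ_q d𝔮(q)`.  The map
`i_𝔮 : L⁰(μtot) → L⁰(𝔮 ; L⁰(μ_⋆))` sending the class of `F` to the `𝔮`-a.e. class of
`q ↦ [F]_{μ q}` is a well-defined linear and ring isomorphism onto the space of those
classes of families admitting a common measurable representative. -/
theorem i_q_linear_ring_isomorphism
    (𝔮 : Measure Q) (μ : Q → Measure X)
    (hmeas : ∀ E : Set X, MeasurableSet E → Measurable fun q => μ q E)
    -- disjointness: pairwise disjoint carriers with measurable unions
    (car : Q → Set X) (hcar : ∀ q, MeasurableSet (car q))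
    (hdisj : Pairwise (Function.onFun Disjoint car))
    (hcar0 : ∀ q, μ q (Set.univ \ car q) = 0)
    (hcarU : ∀ A : Set Q, MeasurableSet A → MeasurableSet (⋃ q ∈ A, car q))
    (μtot : Measure X) [SigmaFinite μtot]
    (hμtot : ∀ E : Set X, MeasurableSet E → μtot E = ∫⁻ q, μ q E ∂𝔮)
    (i : (X →ₘ[μtot] ℝ) → Quotient (aeFamilySetoid 𝔮 μ))
    (hi : ∀ F : X →ₘ[μtot] ℝ, i F = Quotient.mk (aeFamilySetoid 𝔮 μ) fun _ => ⇑F) :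
    -- `i_𝔮` is injective,
    Function.Injective i ∧
    -- its image is exactly `L⁰(𝔮 ; L⁰(μ_⋆))`, i.e. the classes of families admitting
    -- a single measurable representative,
    (∀ f : Q → X → ℝ,
      (∃ F : X → ℝ, Measurable F ∧ ∀ᵐ q ∂𝔮, f q =ᵐ[μ q] F) →
      ∃ G : X →ₘ[μtot] ℝ, i G = Quotient.mk (aeFamilySetoid 𝔮 μ) f) ∧
    (∀ F : X →ₘ[μtot] ℝ, ∃ f : Q → X → ℝ,
      i F = Quotient.mk (aeFamilySetoid 𝔮 μ) f ∧
      ∃ G : X → ℝ, Measurable G ∧ ∀ᵐ q ∂𝔮, f q =ᵐ[μ q] G) ∧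
    -- and it is linear and multiplicative.
    (∀ F G : X →ₘ[μtot] ℝ,
      i (F + G) = Quotient.mk (aeFamilySetoid 𝔮 μ) fun q x => F x + G x) ∧
    (∀ (c : ℝ) (F : X →ₘ[μtot] ℝ),
      i (c • F) = Quotient.mk (aeFamilySetoid 𝔮 μ) fun q x => c * F x) ∧
    (∀ F G : X →ₘ[μtot] ℝ,
      i (F * G) = Quotient.mk (aeFamilySetoid 𝔮 μ) fun q x => F x * G x) := by
  -- transfer of null sets from `μtot` to a.e. fiber
  have hnull : ∀ s : Set X, μtot s = 0 → ∀ᵐ q ∂𝔮, μ q s = 0 := by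
    intro s hs
    have htm : MeasurableSet (toMeasurable μtot s) := measurableSet_toMeasurable _ _
    have htt : μtot (toMeasurable μtot s) = 0 := by
      rw [measure_toMeasurable]; exact hs
    rw [hμtot _ htm] at htt
    have h0 := (lintegral_eq_zero_iff (hmeas _ htm)).mp htt
    filter_upwards [h0] with q hq
    exact measure_mono_null (subset_toMeasurable _ _) hq
  have hae : ∀ h₁ h₂ : X → ℝ, h₁ =ᵐ[μtot] h₂ → ∀ᵐ q ∂𝔮, h₁ =ᵐ[μ q] h₂ := by
    intro h₁ h₂ h
    have := hnull _ (MeasureTheory.ae_iff.mp h)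
    filter_upwards [this] with q hq
    exact MeasureTheory.ae_iff.mpr hq
  refine ⟨?_, ?_, ?_, ?_, ?_, ?_⟩
  · -- injectivity
    intro F G h
    rw [hi F, hi G] at h
    have hq : ∀ᵐ q ∂𝔮, ⇑F =ᵐ[μ q] ⇑G := Quotient.exact h
    set F' := (AEEqFun.aestronglyMeasurable F).mk ⇑F with hF'def
    set G' := (AEEqFun.aestronglyMeasurable G).mk ⇑G with hG'def
    have hF'm : Measurable F' := (AEEqFun.aestronglyMeasurable F).stronglyMeasurable_mk.measurable
    have hG'm : Measurable G' := (AEEqFun.aestronglyMeasurable G).stronglyMeasurable_mk.measurable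
    have hF'eq : ⇑F =ᵐ[μtot] F' := (AEEqFun.aestronglyMeasurable F).ae_eq_mk
    have hG'eq : ⇑G =ᵐ[μtot] G' := (AEEqFun.aestronglyMeasurable G).ae_eq_mk
    have hq' : ∀ᵐ q ∂𝔮, F' =ᵐ[μ q] G' := by
      filter_upwards [hq, hae _ _ hF'eq, hae _ _ hG'eq] with q h1 h2 h3
      exact (h2.symm.trans h1).trans h3
    have hM : MeasurableSet {x | ¬ F' x = G' x} :=
      (measurableSet_eq_fun hF'm hG'm).compl
    have hz : ∀ᵐ q ∂𝔮, μ q {x | ¬ F' x = G' x} = 0 := by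
      filter_upwards [hq'] with q h1
      exact MeasureTheory.ae_iff.mp h1
    have hμ0 : μtot {x | ¬ F' x = G' x} = 0 := by
      rw [hμtot _ hM]
      exact (lintegral_eq_zero_iff (hmeas _ hM)).mpr hz
    have : F' =ᵐ[μtot] G' := MeasureTheory.ae_iff.mpr hμ0
    have : ⇑F =ᵐ[μtot] ⇑G := (hF'eq.trans this).trans hG'eq.symm
    exact AEEqFun.ext this
  · -- surjectivity onto families with a common measurable representative
    intro f ⟨F, hFm, hF⟩
    refine ⟨AEEqFun.mk F hFm.aestronglyMeasurable, ?_⟩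
    rw [hi]
    apply Quotient.sound
    have hcoe : ⇑(AEEqFun.mk F hFm.aestronglyMeasurable) =ᵐ[μtot] F :=
      AEEqFun.coeFn_mk F _
    filter_upwards [hF, hae _ _ hcoe] with q h1 h2
    exact h2.trans h1.symm
  · -- every image class admits a common measurable representative
    intro F
    refine ⟨fun _ => ⇑F, hi F, (AEEqFun.aestronglyMeasurable F).mk ⇑F,
      (AEEqFun.aestronglyMeasurable F).stronglyMeasurable_mk.measurable, ?_⟩
    exact hae _ _ (AEEqFun.aestronglyMeasurable F).ae_eq_mk
  · -- additivity
    intro F G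
    rw [hi]
    apply Quotient.sound
    have : ⇑(F + G) =ᵐ[μtot] fun x => F x + G x := AEEqFun.coeFn_add F G
    exact hae _ _ this
  · -- scalar multiplication
    intro c F
    rw [hi]
    apply Quotient.sound
    have : ⇑(c • F) =ᵐ[μtot] fun x => c * F x := by
      filter_upwards [AEEqFun.coeFn_smul c F] with x hx
      simpa [smul_eq_mul] using hx
    exact hae _ _ this
  · -- multiplicativity
    intro F G
    rw [hi]
    apply Quotient.sound
    have : ⇑(F * G) =ᵐ[μtot] fun x => F x * G x := AEEqFun.coeFn_mul F G
    exact hae _ _ this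
end

section
/- Let (X,d,𝔪) be an isotropic PI space and f ∈ BV(X). With the index space Q = ℝ ⊔ ℕ carrying the measure 𝔮 = Lebesgue on ℝ plus counting on ℕ, and with μ^f_t := P({f̄>t},·)|_{X_f∖J_f} for t ∈ ℝ and μ^f_n := (f^∨−f^∧) P({f̄>t_n},·)|_{Γ_n} for n ∈ ℕ (where (Γ_n) is a Borel partition of J_f with Γ_n ⊆ ∂*{f̄>t_n}), one has |Df| = ∫ μ^f_q d𝔮(q). -/
open MeasureTheory Metric Filter Topology ENNReal

variable {X : Type*} [MetricSpace X] [MeasurableSpace X] [BorelSpace X]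

/-- The asymptotic (Lipschitz) slope `lip_a f (x) = limsup_{y,z→x} |f y − f z| / d(y,z)`;
it vanishes at isolated points. -/
noncomputable def asympSlope (f : X → ℝ) (x : X) : ℝ≥0∞ :=
  ⨅ (r : ℝ) (_ : 0 < r), ⨆ (y : X) (_ : y ∈ ball x r) (z : X) (_ : z ∈ ball x r) (_ : y ≠ z),
    ENNReal.ofReal (|f y - f z| / dist y z)

/-- Locally Lipschitz functions on a set `U`. -/
def LocLipschitzOn (f : X → ℝ) (U : Set X) : Prop :=
  ∀ x ∈ U, ∃ r : ℝ, 0 < r ∧ ∃ K : NNReal, LipschitzOnWith K f (ball x r ∩ U)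

/-- Convergence in `L¹_loc(U)`. -/
def TendstoL1Loc (m : Measure X) (F : ℕ → X → ℝ) (f : X → ℝ) (U : Set X) : Prop :=
  ∀ K : Set X, IsCompact K → K ⊆ U →
    Tendsto (fun n => ∫⁻ x in K, ENNReal.ofReal |F n x - f x| ∂m) atTop (𝓝 0)

/-- The total variation `|Df|(U)` of `f` on `U`, defined by relaxation of the asymptotic
slope of locally Lipschitz, locally integrable approximations. -/
noncomputable def totalVariationOn (m : Measure X) (f : X → ℝ) (U : Set X) : ℝ≥0∞ :=
  ⨅ (F : ℕ → X → ℝ) (_ : ∀ n, LocLipschitzOn (F n) U)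
    (_ : ∀ n, ∫⁻ x in U, ENNReal.ofReal |F n x| ∂m ≠ ⊤)
    (_ : TendstoL1Loc m F f U),
    Filter.liminf (fun n => ∫⁻ x in U, asympSlope (F n) x ∂m) Filter.atTop

/-- `f ∈ BV(X)`. -/
def IsBV (m : Measure X) (f : X → ℝ) : Prop :=
  Integrable f m ∧ totalVariationOn m f Set.univ ≠ ⊤

/-- The upper density `Θ*(E,x) = limsup_{r↓0} m(E ∩ B_r(x)) / m(B_r(x))`. -/
noncomputable def upperDensity (m : Measure X) (E : Set X) (x : X) : ℝ≥0∞ :=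
  Filter.limsup (fun r : ℝ => m (E ∩ ball x r) / m (ball x r)) (𝓝[>] (0:ℝ))

/-- The essential boundary `∂*E`. -/
def essBoundary (m : Measure X) (E : Set X) : Set X :=
  {x | 0 < upperDensity m E x ∧ 0 < upperDensity m Eᶜ x}

/-- The approximate lower limit `f^∧`. -/
noncomputable def approxLower (m : Measure X) (f : X → ℝ) (x : X) : EReal :=
  sSup (Real.toEReal '' {t : ℝ | upperDensity m {y | f y < t} x = 0})

/-- The approximate upper limit `f^∨`. -/
noncomputable def approxUpper (m : Measure X) (f : X → ℝ) (x : X) : EReal :=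
  sInf (Real.toEReal '' {t : ℝ | upperDensity m {y | t < f y} x = 0})

/-- The set `X_f = {f^∧ > −∞} ∩ {f^∨ < +∞}` where the precise representative is defined. -/
def domPrecise (m : Measure X) (f : X → ℝ) : Set X :=
  {x | ⊥ < approxLower m f x ∧ approxUpper m f x < ⊤}

/-- The precise representative `f̄ = (f^∧ + f^∨)/2` (junk outside `X_f`). -/
noncomputable def preciseRep (m : Measure X) (f : X → ℝ) (x : X) : ℝ :=
  ((approxLower m f x).toReal + (approxUpper m f x).toReal) / 2

/-- The jump set `J_f = {f^∧ < f^∨}`. -/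
def jumpSet (m : Measure X) (f : X → ℝ) : Set X :=
  {x ∈ domPrecise m f | approxLower m f x < approxUpper m f x}

/-- The superlevel set `{f̄ > t}` of the precise representative. -/
def superlevelBar (m : Measure X) (f : X → ℝ) (t : ℝ) : Set X :=
  {x ∈ domPrecise m f | t < preciseRep m f x}

/-- Uniformly locally doubling measure. -/
def UniformlyLocallyDoubling (m : Measure X) : Prop :=
  ∃ C : ℝ → ℝ≥0∞, Monotone C ∧ ∀ R : ℝ, 0 < R → ∀ r : ℝ, 0 < r → r < R → ∀ x : X,
    m (ball x (2 * r)) ≤ C R * m (ball x r)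

/-- Weak local `(1,1)`-Poincaré inequality. -/
def WeakPoincare11 (m : Measure X) : Prop :=
  ∃ lam : ℝ, 1 ≤ lam ∧ ∃ C : ℝ → ℝ≥0∞, Monotone C ∧
    ∀ f : X → ℝ, (∃ K : NNReal, LipschitzWith K f) →
    ∀ R : ℝ, 0 < R → ∀ r : ℝ, 0 < r → r < R → ∀ x : X,
      (m (ball x r))⁻¹ *
          ∫⁻ y in ball x r, ENNReal.ofReal |f y - ⨍ z in ball x r, f z ∂m| ∂m ≤
        C R * ENNReal.ofReal r *
          ((m (ball x (lam * r)))⁻¹ * ∫⁻ y in ball x (lam * r), asympSlope f y ∂m)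

/-- PI space: uniformly locally doubling and supporting a weak `(1,1)`-Poincaré inequality. -/
def IsPIspace (m : Measure X) : Prop :=
  UniformlyLocallyDoubling m ∧ WeakPoincare11 m

/-- The jump `f^∨ − f^∧` of a BV function (as a nonnegative extended number, junk where
the approximate limits are infinite). -/
noncomputable def jumpGap {X : Type*} [MetricSpace X] [MeasurableSpace X] [BorelSpace X]
    (m : Measure X) (f : X → ℝ) (x : X) : ℝ≥0∞ :=
  ENNReal.ofReal ((approxUpper m f x).toReal - (approxLower m f x).toReal)

/-- Let `(X,d,𝔪)` be an isotropic PI space and `f ∈ BV(X)`.  Let `P t`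
be the perimeter measure of `{f̄ > t}`, satisfying the coarea formula for `|Df|`, and let
`(Γ n)` be a Borel partition of the jump set `J_f` with `Γ n ⊆ ∂*{f̄ > t_n}`.  Isotropy
yields `|Df||_{J_f ∩ ∂*{f̄>t_n}} = (f^∨−f^∧) P(t_n,·)|_{J_f}` (hypothesis `hisotropic`).
Then, with the index space `Q = ℝ ⊔ ℕ` carrying Lebesgue plus counting measure and
`μ^f_t = P({f̄>t},·)|_{X_f∖J_f}`, `μ^f_n = (f^∨−f^∧) P({f̄>t_n},·)|_{Γ_n}`, one has
`|Df| = ∫ μ^f_q d𝔮(q)`, i.e. for every Borel `E`: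
`|Df|(E) = ∫_ℝ P t (E ∩ (X_f∖J_f)) dt + ∑_n ∫_{E∩Γ_n} (f^∨−f^∧) dP(t_n,·)`. -/
theorem coarea_decomposition_with_jump_part
    {X : Type*} [MetricSpace X] [MeasurableSpace X] [BorelSpace X]
    [CompleteSpace X] [TopologicalSpace.SeparableSpace X]
    (m : Measure X) (hbf : ∀ (x : X) (r : ℝ), m (ball x r) ≠ ⊤)
    (hPI : IsPIspace m)
    (f : X → ℝ) (hf : IsBV m f)
    -- the perimeter measures of the superlevel sets
    (P : ℝ → Measure X)
    (hP_open : ∀ (t : ℝ) (U : Set X), IsOpen U →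
      P t U = totalVariationOn m (Set.indicator (superlevelBar m f t) fun _ => (1:ℝ)) U)
    (hP_conc : ∀ t : ℝ, P t (essBoundary m (superlevelBar m f t))ᶜ = 0)
    (hP_meas : ∀ E : Set X, MeasurableSet E → Measurable fun t => P t E)
    -- the total variation measure `|Df|`, the coarea formula, and `|Df|(X∖X_f) = 0`
    (DF : Measure X) [IsFiniteMeasure DF]
    (hDF_open : ∀ U : Set X, IsOpen U → DF U = totalVariationOn m f U)
    (hcoarea : ∀ E : Set X, MeasurableSet E →
      DF E = ∫⁻ t, P t E ∂(volume : Measure ℝ))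
    (hDF_dom : DF (Set.univ \ domPrecise m f) = 0)
    -- the Borel partition `(Γ n)` of the jump set, `Γ n ⊆ ∂*{f̄ > t_n}`
    (Γ : ℕ → Set X) (tseq : ℕ → ℝ)
    (hΓ_meas : ∀ n, MeasurableSet (Γ n))
    (hΓ_disj : Pairwise (Function.onFun Disjoint Γ))
    (hΓ_union : (⋃ n, Γ n) = jumpSet m f)
    (hΓ_sub : ∀ n, Γ n ⊆ essBoundary m (superlevelBar m f (tseq n)))
    -- isotropy, via its consequence (2.9) on the superlevel sets:
    -- `|Df||_{J_f ∩ ∂*{f̄>t}} = (f^∨ − f^∧) P({f̄>t},·)|_{J_f}`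
    (hisotropic : ∀ (t : ℝ) (E : Set X), MeasurableSet E →
      DF (E ∩ jumpSet m f ∩ essBoundary m (superlevelBar m f t)) =
        ∫⁻ x in E ∩ jumpSet m f, jumpGap m f x ∂(P t)) :
    ∀ E : Set X, MeasurableSet E →
      DF E = (∫⁻ t, P t (E ∩ (domPrecise m f \ jumpSet m f)) ∂(volume : Measure ℝ)) +
        ∑' n : ℕ, ∫⁻ x in E ∩ Γ n, jumpGap m f x ∂(P (tseq n)) := by
  intro E hE
  have hJ : jumpSet m f = ⋃ n, Γ n := hΓ_union.symm
  have hJmeas : MeasurableSet (jumpSet m f) := by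
    rw [hJ]; exact MeasurableSet.iUnion hΓ_meas
  set S := toMeasurable DF (Set.univ \ domPrecise m f) with hS
  have hSmeas : MeasurableSet S := measurableSet_toMeasurable _ _
  have hSsub : Set.univ \ domPrecise m f ⊆ S := subset_toMeasurable _ _
  have hDFS : DF S = 0 := by
    rw [hS, measure_toMeasurable]; exact hDF_dom
  have hPS : ∀ᵐ t : ℝ, P t S = 0 := by
    have h1 : ∫⁻ t, P t S = 0 := by rw [← hcoarea S hSmeas, hDFS]
    exact (lintegral_eq_zero_iff (hP_meas S hSmeas)).mp h1
  -- split E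
  have hsplit : DF E = DF (E ∩ (jumpSet m f)) + DF (E \ (jumpSet m f)) :=
    (measure_inter_add_diff E hJmeas).symm
  -- absolutely continuous part
  have hAmeas : MeasurableSet ((E \ (jumpSet m f)) \ S) := (hE.diff hJmeas).diff hSmeas
  have hdiff : DF (E \ (jumpSet m f)) = DF ((E \ (jumpSet m f)) \ S) := by
    have h2 : DF (E \ (jumpSet m f)) = DF ((E \ (jumpSet m f)) ∩ S) + DF ((E \ (jumpSet m f)) \ S) :=
      (measure_inter_add_diff _ hSmeas).symm
    have h3 : DF ((E \ (jumpSet m f)) ∩ S) = 0 :=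
      le_antisymm (hDFS ▸ measure_mono Set.inter_subset_right) zero_le
    rw [h2, h3, zero_add]
  have hACae : ∀ᵐ t : ℝ, P t ((E \ (jumpSet m f)) \ S) = P t (E ∩ (domPrecise m f \ (jumpSet m f))) := by
    filter_upwards [hPS] with t ht
    have hsub1 : (E \ (jumpSet m f)) \ S ⊆ E ∩ (domPrecise m f \ (jumpSet m f)) := by
      rintro x ⟨⟨hxE, hxJ⟩, hxS⟩
      refine ⟨hxE, ?_, hxJ⟩
      by_contra hxd
      exact hxS (hSsub ⟨Set.mem_univ x, hxd⟩)
    have hsub2 : E ∩ (domPrecise m f \ (jumpSet m f)) ⊆ ((E \ (jumpSet m f)) \ S) ∪ S := by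
      rintro x ⟨hxE, hxd, hxJ⟩
      by_cases hxS : x ∈ S
      · exact Or.inr hxS
      · exact Or.inl ⟨⟨hxE, hxJ⟩, hxS⟩
    refine le_antisymm (measure_mono hsub1) ?_
    calc P t (E ∩ (domPrecise m f \ (jumpSet m f))) ≤ P t (((E \ (jumpSet m f)) \ S) ∪ S) :=
          measure_mono hsub2
      _ ≤ P t ((E \ (jumpSet m f)) \ S) + P t S := measure_union_le _ _
      _ = P t ((E \ (jumpSet m f)) \ S) := by rw [ht, add_zero]
  have hAC : DF (E \ (jumpSet m f)) =
      ∫⁻ t, P t (E ∩ (domPrecise m f \ (jumpSet m f))) ∂(volume : Measure ℝ) := by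
    rw [hdiff, hcoarea _ hAmeas]
    exact lintegral_congr_ae hACae
  -- jump part
  have hEJ : E ∩ (jumpSet m f) = ⋃ n, E ∩ Γ n := by
    rw [hJ, Set.inter_iUnion]
  have hjump : DF (E ∩ (jumpSet m f)) = ∑' n : ℕ, DF (E ∩ Γ n) := by
    rw [hEJ]
    exact measure_iUnion
      (fun i j hij => (hΓ_disj hij).mono Set.inter_subset_right Set.inter_subset_right)
      (fun n => hE.inter (hΓ_meas n))
  have hterm : ∀ n : ℕ, DF (E ∩ Γ n) =
      ∫⁻ x in E ∩ Γ n, jumpGap m f x ∂(P (tseq n)) := by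
    intro n
    have hΓJ : Γ n ⊆ (jumpSet m f) := by
      rw [hJ]; exact Set.subset_iUnion Γ n
    have heq1 : (E ∩ Γ n) ∩ (jumpSet m f) = E ∩ Γ n :=
      Set.inter_eq_self_of_subset_left (fun x hx => hΓJ hx.2)
    have heq2 : (E ∩ Γ n) ∩ (jumpSet m f) ∩ essBoundary m (superlevelBar m f (tseq n)) = E ∩ Γ n := by
      rw [heq1]
      exact Set.inter_eq_self_of_subset_left (fun x hx => hΓ_sub n hx.2)
    have := hisotropic (tseq n) (E ∩ Γ n) (hE.inter (hΓ_meas n))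
    rw [heq2, heq1] at this
    exact this
  rw [hsplit, hAC, hjump, add_comm]
  congr 1
  exact tsum_congr hterm
end

section
/- Let (X,d,𝔪) be an RCD(K,N) space. For every Borel function f : X → ℝ and every ε > 0, there exist a Borel partition (E_n)_{n∈ℕ} of X and test functions (f_n)_{n∈ℕ} ⊆ Test(X) such that |f(x) − f_n(x)| ≤ ε for every n ∈ ℕ and x ∈ E_n. In particular, Test(X) generates L⁰(Cap). -/
open MeasureTheory Metric

/-- Let `(X,d,𝔪)` be an `RCD(K,N)` space and let `Test(X)` denote its
algebra of test functions.  The `RCD` structure enters only through the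
Ambrosio–Mondino–Savaré cut-off property: for every bounded Borel set `E` and every
constant `λ`, there is a test function equal to `λ` on an open ball containing `E`
(hypothesis `hcutoff`).  Then for every Borel function `f : X → ℝ` and every `ε > 0`
there are a Borel partition `(E_n)` of `X` and test functions `(f_n) ⊆ Test(X)` with
`|f(x) − f_n(x)| ≤ ε` for all `n` and all `x ∈ E_n`.  In particular, `Test(X)` generates
`L⁰(Cap)`: every Borel function is uniformly approximated by countable glueings of test
functions along Borel partitions. -/
theorem test_functions_generate
    {X : Type*} [MetricSpace X] [MeasurableSpace X] [BorelSpace X]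
    [CompleteSpace X] [TopologicalSpace.SeparableSpace X] [Nonempty X]
    (m : Measure X) (hbf : ∀ (x : X) (r : ℝ), m (ball x r) ≠ ⊤)
    (Test : Set (X → ℝ))
    (hcutoff : ∀ (E : Set X), MeasurableSet E → Bornology.IsBounded E → ∀ lam : ℝ,
      ∃ g ∈ Test, ∃ (x : X) (r : ℝ), 0 < r ∧ E ⊆ ball x r ∧ ∀ y ∈ ball x r, g y = lam) :
    ∀ f : X → ℝ, Measurable f → ∀ ε : ℝ, 0 < ε →
      ∃ (E : ℕ → Set X) (g : ℕ → X → ℝ),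
        (∀ n, MeasurableSet (E n)) ∧ Pairwise (Function.onFun Disjoint E) ∧
        (⋃ n, E n) = Set.univ ∧ (∀ n, g n ∈ Test) ∧
        ∀ (n : ℕ), ∀ x ∈ E n, |f x - g n x| ≤ ε := by
  intro f hf ε hε
  obtain ⟨x₀⟩ := ‹Nonempty X›
  -- partition indexed by ℤ × ℕ : value slab × annulus
  set P : ℤ × ℕ → Set X := fun p =>
    f ⁻¹' Set.Ico ((p.1 : ℝ) * ε) ((p.1 + 1 : ℝ) * ε) ∩
      (ball x₀ (p.2 + 1) \ ball x₀ p.2) with hP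
  have hPmeas : ∀ p, MeasurableSet (P p) := by
    intro p
    exact (hf measurableSet_Ico).inter
      ((measurableSet_ball).diff measurableSet_ball)
  have hPbdd : ∀ p, Bornology.IsBounded (P p) := by
    intro p
    exact (isBounded_ball (x := x₀) (r := (p.2 : ℝ) + 1)).subset
      fun x hx => hx.2.1
  -- choose cut-off functions
  have hch : ∀ p : ℤ × ℕ, ∃ g ∈ Test, ∃ (x : X) (r : ℝ),
      0 < r ∧ P p ⊆ ball x r ∧ ∀ y ∈ ball x r, g y = (p.1 : ℝ) * ε :=
    fun p => hcutoff (P p) (hPmeas p) (hPbdd p) _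
  choose G hGTest c r hr hsub hval using hch
  -- enumerate ℤ × ℕ
  let e : ℕ ≃ ℤ × ℕ := (Denumerable.eqv (ℤ × ℕ)).symm
  refine ⟨fun n => P (e n), fun n => G (e n), fun n => hPmeas _, ?_, ?_,
    fun n => hGTest _, ?_⟩
  · -- pairwise disjoint
    intro i j hij
    have hij' : e i ≠ e j := fun h => hij (e.injective h)
    simp only [Function.onFun]
    rw [Set.disjoint_left]
    rintro x ⟨hx1, hx2⟩ ⟨hy1, hy2⟩
    rcases eq_or_ne (e i).1 (e j).1 with hk | hk
    · -- first coords equal, so annuli indices differ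
      have hn : (e i).2 ≠ (e j).2 := by
        intro h; exact hij' (Prod.ext hk h)
      rcases hn.lt_or_gt with h | h
      · have h1 : dist x x₀ < (e i).2 + 1 := hx2.1
        have h2 : ¬ dist x x₀ < (e j).2 := hy2.2
        exact h2 (lt_of_lt_of_le h1 (by exact_mod_cast h))
      · have h1 : dist x x₀ < (e j).2 + 1 := hy2.1
        have h2 : ¬ dist x x₀ < (e i).2 := hx2.2
        exact h2 (lt_of_lt_of_le h1 (by exact_mod_cast h))
    · rcases hk.lt_or_gt with h | h
      · have h1 : f x < ((e i).1 + 1 : ℝ) * ε := hx1.2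
        have h2 : ((e j).1 : ℝ) * ε ≤ f x := hy1.1
        have : ((e i).1 + 1 : ℝ) ≤ ((e j).1 : ℝ) := by exact_mod_cast h
        nlinarith [mul_le_mul_of_nonneg_right this hε.le]
      · have h1 : f x < ((e j).1 + 1 : ℝ) * ε := hy1.2
        have h2 : ((e i).1 : ℝ) * ε ≤ f x := hx1.1
        have : ((e j).1 + 1 : ℝ) ≤ ((e i).1 : ℝ) := by exact_mod_cast h
        nlinarith [mul_le_mul_of_nonneg_right this hε.le]
  · -- union is univ
    apply Set.eq_univ_of_forall
    intro x
    refine Set.mem_iUnion.2 ⟨e.symm (⌊f x / ε⌋, ⌊dist x x₀⌋₊), ?_⟩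
    simp only [Equiv.apply_symm_apply]
    refine ⟨⟨?_, ?_⟩, ?_, ?_⟩
    · exact (le_div_iff₀ hε).1 (Int.floor_le _)
    · exact (div_lt_iff₀ hε).1 (Int.lt_floor_add_one _)
    · exact mem_ball.2 (Nat.lt_floor_add_one _)
    · exact fun h => absurd (mem_ball.1 h) (not_lt.2 (Nat.floor_le dist_nonneg))
  · -- approximation
    intro n x hx
    set p := e n
    have hxball : x ∈ ball (c p) (r p) := hsub p hx
    have hgv : G p x = (p.1 : ℝ) * ε := hval p x hxball
    have h1 : ((p.1 : ℝ)) * ε ≤ f x := hx.1.1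
    have h2 : f x < ((p.1 : ℝ) + 1) * ε := hx.1.2
    show |f x - G p x| ≤ ε
    rw [hgv, abs_le]
    constructor <;> nlinarith
end
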